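/- Let f : [a,b] → ℝ (a < b) be such that f′ is absolutely continuous on [a,b] and f″ ∈ L¹[a,b]. If |f″|^q is s-concave in the second sense on [a,b] for some fixed s ∈ (0,1], where q > 1 and 1/p + 1/q = 1, then for all x ∈ [a, (a+b)/2]: |(1/(b−a))∫_a^b f(t) dt − (1/2)[f(x)+f(a+b−x)] + (1/2)(x − (3a+b)/4)[f′(x) − f′(a+b−x)]| ≤ (2^{(s−1)/q}/(2(b−a)(2p+1)^{1/p}))[(x−a)³|f″((x+a)/2)| + ((a+b−2x)³/4)|f″((a+b)/2)| + (x−a)³|f″((a+2b−x)/2)|]. -/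

import Mathlib

open MeasureTheory

def SConcaveOn (s : ℝ) (D : Set ℝ) (g : ℝ → ℝ) : Prop :=
  ∀ x ∈ D, ∀ y ∈ D, ∀ α β : ℝ, 0 ≤ α → 0 ≤ β → α + β = 1 →
    α ^ s * g x + β ^ s * g y ≤ g (α * x + β * y)

section Aux

lemma parts2 (f f' f'' : ℝ → ℝ) (u v r : ℝ) (huv : u ≤ v)
    (hf' : ∀ t ∈ Set.Icc u v, HasDerivAt f (f' t) t)
    (hf'' : ∀ t ∈ Set.Icc u v, HasDerivAt f' (f'' t) t)
    (hint : IntervalIntegrable f'' volume u v) :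
    ∫ t in u..v, (t - r) ^ 2 / 2 * f'' t
      = (v - r) ^ 2 / 2 * f' v - (u - r) ^ 2 / 2 * f' u
        - ((v - r) * f v - (u - r) * f u) + ∫ t in u..v, f t := by
  have hIcc : Set.uIcc u v = Set.Icc u v := Set.uIcc_of_le huv
  have hcf' : ContinuousOn f' (Set.uIcc u v) := by
    rw [hIcc]; exact fun t ht => ((hf'' t ht).continuousAt).continuousWithinAt
  have hcf : ContinuousOn f (Set.uIcc u v) := by
    rw [hIcc]; exact fun t ht => ((hf' t ht).continuousAt).continuousWithinAt
  have h1 : ∫ t in u..v, (t - r) ^ 2 / 2 * f'' t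
      = (v - r) ^ 2 / 2 * f' v - (u - r) ^ 2 / 2 * f' u - ∫ t in u..v, (t - r) * f' t := by
    apply intervalIntegral.integral_mul_deriv_eq_deriv_mul (u' := fun t => t - r)
      (fun t ht => by
        simpa using ((hasDerivAt_id t).sub_const r).pow 2 |>.div_const 2)
      (fun t ht => hf'' t (hIcc ▸ ht))
      ((ContinuousOn.sub continuousOn_id continuousOn_const).intervalIntegrable) hint
  have h2 : ∫ t in u..v, (t - r) * f' t
      = (v - r) * f v - (u - r) * f u - ∫ t in u..v, f t := by
    have := intervalIntegral.integral_mul_deriv_eq_deriv_mul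
      (u := fun t => t - r) (u' := fun _ => (1:ℝ)) (v := f) (v' := f')
      (fun t ht => by simpa using (hasDerivAt_id t).sub_const r)
      (fun t ht => hf' t (hIcc ▸ ht))
      (intervalIntegrable_const) (hcf'.intervalIntegrable)
    simpa using this
  rw [h1, h2]; ring

lemma sconcave_int_bound (s : ℝ) (hs0 : 0 < s) (D : Set ℝ) (g : ℝ → ℝ)
    (hc : SConcaveOn s D g) (u v : ℝ) (huv : u ≤ v) (hsub : Set.Icc u v ⊆ D)
    (hint : IntervalIntegrable g volume u v) :
    ∫ t in u..v, g t ≤ 2 ^ (s - 1) * (v - u) * g ((u + v) / 2) := by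
  have key : ∀ t ∈ Set.Icc u v, g t + g (u + v - t) ≤ 2 ^ s * g ((u + v) / 2) := by
    intro t ht
    have ht' : u + v - t ∈ Set.Icc u v := by
      constructor <;> [linarith [ht.2]; linarith [ht.1]]
    have := hc t (hsub ht) (u + v - t) (hsub ht') (1/2) (1/2) (by norm_num) (by norm_num)
      (by norm_num)
    have hmid : (1:ℝ)/2 * t + 1/2 * (u + v - t) = (u + v) / 2 := by ring
    rw [hmid] at this
    have h2s : ((1:ℝ)/2) ^ s = (2 ^ s)⁻¹ := by
      rw [one_div, Real.inv_rpow (by norm_num)]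
    rw [h2s] at this
    have h2pos : (0:ℝ) < 2 ^ s := Real.rpow_pos_of_pos (by norm_num) s
    calc g t + g (u + v - t) = 2 ^ s * ((2 ^ s)⁻¹ * g t + (2 ^ s)⁻¹ * g (u + v - t)) := by
          field_simp
      _ ≤ 2 ^ s * g ((u + v) / 2) := by
          exact mul_le_mul_of_nonneg_left this (le_of_lt h2pos)
  have hrefl : ∫ t in u..v, g (u + v - t) = ∫ t in u..v, g t := by
    have := intervalIntegral.integral_comp_sub_left (a := u) (b := v) g (u + v)
    simpa using this
  have hint' : IntervalIntegrable (fun t => g (u + v - t)) volume u v := by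
    simpa using (hint.comp_sub_left (u + v)).symm
  have hsum : ∫ t in u..v, (g t + g (u + v - t)) ≤ ∫ t in u..v, (2:ℝ) ^ s * g ((u + v) / 2) := by
    apply intervalIntegral.integral_mono_on huv (hint.add hint') intervalIntegrable_const key
  rw [intervalIntegral.integral_add hint hint', hrefl, intervalIntegral.integral_const] at hsum
  have h2 : (2:ℝ) ^ (s - 1) = 2 ^ s / 2 := by
    rw [Real.rpow_sub (by norm_num), Real.rpow_one]
  rw [h2, smul_eq_mul] at *
  nlinarith [hsum]

lemma holder_piece (u v : ℝ) (huv : u ≤ v) (w h : ℝ → ℝ) (p q : ℝ)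
    (hpq : Real.HolderConjugate p q)
    (hw : ContinuousOn w (Set.Icc u v))
    (hwm : AEStronglyMeasurable h (volume.restrict (Set.Ioc u v)))
    (hw0 : ∀ t ∈ Set.Icc u v, 0 ≤ w t) (hh0 : ∀ t, 0 ≤ h t)
    (B : ℝ) (hB : ∀ t ∈ Set.Icc u v, h t ≤ B) :
    ∫ t in u..v, w t * h t
      ≤ (∫ t in u..v, w t ^ p) ^ (1/p) * (∫ t in u..v, h t ^ q) ^ (1/q) := by
  have hmeas : MeasurableSet (Set.Ioc u v) := measurableSet_Ioc
  haveI : IsFiniteMeasure (volume.restrict (Set.Ioc u v)) := by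
    constructor
    rw [Measure.restrict_apply_univ, Real.volume_Ioc]
    exact ENNReal.ofReal_lt_top
  have hsub : Set.Ioc u v ⊆ Set.Icc u v := Set.Ioc_subset_Icc_self
  have hwm' : AEStronglyMeasurable w (volume.restrict (Set.Ioc u v)) :=
    (hw.mono hsub).aestronglyMeasurable hmeas
  have hCw : ∃ Cw, ∀ t ∈ Set.Icc u v, |w t| ≤ Cw := by
    obtain ⟨Cw, hCw⟩ := IsCompact.exists_bound_of_continuousOn isCompact_Icc hw
    exact ⟨Cw, fun t ht => by simpa using hCw t ht⟩
  obtain ⟨Cw, hCw⟩ := hCw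
  have hmemw : MemLp w (ENNReal.ofReal p) (volume.restrict (Set.Ioc u v)) := by
    apply MemLp.of_bound hwm' Cw
    filter_upwards [ae_restrict_mem hmeas] with t ht
    simpa using hCw t (hsub ht)
  have hmemh : MemLp h (ENNReal.ofReal q) (volume.restrict (Set.Ioc u v)) := by
    apply MemLp.of_bound hwm (max B 0)
    filter_upwards [ae_restrict_mem hmeas] with t ht
    rw [Real.norm_eq_abs, abs_of_nonneg (hh0 t)]
    exact le_max_of_le_left (hB t (hsub ht))
  have hw0' : 0 ≤ᵐ[volume.restrict (Set.Ioc u v)] w := by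
    filter_upwards [ae_restrict_mem hmeas] with t ht using hw0 t (hsub ht)
  have hh0' : 0 ≤ᵐ[volume.restrict (Set.Ioc u v)] h :=
    Filter.Eventually.of_forall fun t => hh0 t
  have key := integral_mul_le_Lp_mul_Lq_of_nonneg hpq hw0' hh0' hmemw hmemh
  rw [intervalIntegral.integral_of_le huv, intervalIntegral.integral_of_le huv,
    intervalIntegral.integral_of_le huv]
  exact key

lemma sconcave_ptwise_bound (s q : ℝ) (a b : ℝ) (f'' : ℝ → ℝ)
    (hconc : SConcaveOn s (Set.Icc a b) (fun t => |f'' t| ^ q)) (hab : a ≤ b) :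
    ∀ t ∈ Set.Icc a b, |f'' t| ^ q ≤ 2 ^ s * |f'' ((a+b)/2)| ^ q := by
  intro t ht
  have ht' : a + b - t ∈ Set.Icc a b := ⟨by linarith [ht.2], by linarith [ht.1]⟩
  have h := hconc t ht (a + b - t) ht' (1/2) (1/2) (by norm_num) (by norm_num) (by norm_num)
  have hmid : (1:ℝ)/2 * t + 1/2 * (a + b - t) = (a + b) / 2 := by ring
  rw [hmid] at h
  have h2s : ((1:ℝ)/2) ^ s = (2 ^ s)⁻¹ := by
    rw [one_div, Real.inv_rpow (by norm_num)]
  rw [h2s] at h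
  have h2pos : (0:ℝ) < 2 ^ s := Real.rpow_pos_of_pos (by norm_num) s
  have hnn : (0:ℝ) ≤ (2 ^ s)⁻¹ * |f'' (a + b - t)| ^ q := by positivity
  have : (2 ^ s)⁻¹ * |f'' t| ^ q ≤ |f'' ((a+b)/2)| ^ q := by
    simp only at h; linarith
  calc |f'' t| ^ q = 2 ^ s * ((2 ^ s)⁻¹ * |f'' t| ^ q) := by field_simp
    _ ≤ 2 ^ s * |f'' ((a+b)/2)| ^ q := mul_le_mul_of_nonneg_left this h2pos.le

lemma piece_bound (a b u v r s p q : ℝ) (f'' : ℝ → ℝ)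
    (hp : 1 < p) (hq : 1 < q) (hpq : 1/p + 1/q = 1) (hs0 : 0 < s)
    (hconc : SConcaveOn s (Set.Icc a b) (fun t => |f'' t| ^ q))
    (hint : IntervalIntegrable f'' volume a b)
    (hab : a ≤ b) (hau : a ≤ u) (huv : u ≤ v) (hvb : v ≤ b) :
    |∫ t in u..v, (t - r) ^ 2 / 2 * f'' t|
      ≤ (∫ t in u..v, ((t - r) ^ 2 / 2) ^ p) ^ (1/p)
        * (2 ^ (s-1) * (v - u) * |f'' ((u+v)/2)| ^ q) ^ (1/q) := by
  have hq0 : (0:ℝ) < q := by linarith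
  have hsubI : Set.Icc u v ⊆ Set.Icc a b := Set.Icc_subset_Icc hau hvb
  have hconj : Real.HolderConjugate p q := Real.holderConjugate_iff.mpr ⟨hp, by rw [← one_div, ← one_div]; exact hpq⟩
  set C : ℝ := 2 ^ s * |f'' ((a+b)/2)| ^ q with hC
  have hCb := sconcave_ptwise_bound s q a b f'' hconc hab
  set B : ℝ := C ^ (1/q) with hBdef
  have hB : ∀ t ∈ Set.Icc a b, |f'' t| ≤ B := by
    intro t ht
    have h1 : |f'' t| ^ q ≤ C := hCb t ht
    have := Real.rpow_le_rpow (by positivity) h1 (by positivity : (0:ℝ) ≤ 1/q)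
    rw [one_div, Real.rpow_rpow_inv (abs_nonneg _) (by positivity : q ≠ 0)] at this
    rwa [hBdef, one_div]
  have hint' : IntervalIntegrable f'' volume u v :=
    hint.mono_set (by rw [Set.uIcc_of_le huv, Set.uIcc_of_le hab]; exact hsubI)
  have hmeas : AEStronglyMeasurable f'' (volume.restrict (Set.Ioc u v)) :=
    (hint'.1).aestronglyMeasurable
  have habs : AEStronglyMeasurable (fun t => |f'' t|) (volume.restrict (Set.Ioc u v)) :=
    hmeas.norm.congr (by filter_upwards with t; rw [Real.norm_eq_abs])
  have hgmeas : AEStronglyMeasurable (fun t => |f'' t| ^ q) (volume.restrict (Set.Ioc u v)) :=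
    (Real.continuous_rpow_const hq0.le).comp_aestronglyMeasurable habs
  have hgint : IntervalIntegrable (fun t => |f'' t| ^ q) volume u v := by
    rw [intervalIntegrable_iff_integrableOn_Ioc_of_le huv]
    apply Integrable.mono' (integrable_const C) hgmeas
    filter_upwards [ae_restrict_mem measurableSet_Ioc] with t ht
    rw [Real.norm_eq_abs, abs_of_nonneg (by positivity)]
    exact hCb t (hsubI (Set.Ioc_subset_Icc_self ht))
  have h1 : |∫ t in u..v, (t - r) ^ 2 / 2 * f'' t| ≤ ∫ t in u..v, (t - r) ^ 2 / 2 * |f'' t| := by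
    refine le_trans (intervalIntegral.abs_integral_le_integral_abs huv) (le_of_eq ?_)
    apply intervalIntegral.integral_congr
    intro t _
    simp only [abs_mul, abs_of_nonneg (by positivity : (0:ℝ) ≤ (t-r)^2/2)]
  have h2 := holder_piece u v huv (fun t => (t - r) ^ 2 / 2) (fun t => |f'' t|) p q hconj
    (by fun_prop) habs (fun t _ => by positivity) (fun t => abs_nonneg _)
    B (fun t ht => hB t (hsubI ht))
  have h3 : ∫ t in u..v, |f'' t| ^ q ≤ 2 ^ (s-1) * (v - u) * |f'' ((u+v)/2)| ^ q := by
    exact sconcave_int_bound s hs0 (Set.Icc a b) _ hconc u v huv hsubI hgint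
  have h4 : (∫ t in u..v, |f'' t| ^ q) ^ (1/q)
      ≤ (2 ^ (s-1) * (v - u) * |f'' ((u+v)/2)| ^ q) ^ (1/q) := by
    apply Real.rpow_le_rpow ?_ h3 (by positivity)
    apply intervalIntegral.integral_nonneg huv
    intro t _; positivity
  have h5 : (0:ℝ) ≤ (∫ t in u..v, ((t - r) ^ 2 / 2) ^ p) ^ (1/p) := by
    apply Real.rpow_nonneg
    apply intervalIntegral.integral_nonneg huv
    intro t _; positivity
  calc |∫ t in u..v, (t - r) ^ 2 / 2 * f'' t|
      ≤ ∫ t in u..v, (t - r) ^ 2 / 2 * |f'' t| := h1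
    _ ≤ (∫ t in u..v, ((t - r) ^ 2 / 2) ^ p) ^ (1/p) * (∫ t in u..v, |f'' t| ^ q) ^ (1/q) := h2
    _ ≤ _ := mul_le_mul_of_nonneg_left h4 h5

lemma kernel_int (p L : ℝ) (hp : 0 < p) (hL : 0 ≤ L) :
    ∫ t in (0:ℝ)..L, (t ^ 2 / 2) ^ p = L ^ (2 * p + 1) / ((2 * p + 1) * 2 ^ p) := by
  have h1 : ∀ t ∈ Set.uIcc (0:ℝ) L, (t ^ 2 / 2) ^ p = t ^ (2 * p) / 2 ^ p := by
    intro t ht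
    rw [Set.uIcc_of_le hL] at ht
    rw [Real.div_rpow (sq_nonneg t) (by norm_num)]
    congr 1
    rw [← Real.rpow_natCast t 2, ← Real.rpow_mul ht.1]
    norm_num
  rw [intervalIntegral.integral_congr h1]
  have h2 : ∫ t in (0:ℝ)..L, t ^ (2*p) / 2 ^ p = (∫ t in (0:ℝ)..L, t ^ (2*p)) / 2 ^ p := by
    simp [intervalIntegral.integral_div]
  rw [h2, integral_rpow (Or.inl (by linarith))]
  rw [Real.zero_rpow (by positivity)]
  have hne1 : (2*p+1) ≠ 0 := by positivity
  have hne2 : (2:ℝ)^p ≠ 0 := by positivity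
  field_simp
  ring

lemma K_right (p : ℝ) (hp : 0 < p) (u v : ℝ) (huv : u ≤ v) :
    ∫ t in u..v, ((t - u) ^ 2 / 2) ^ p = (v - u) ^ (2*p+1) / ((2*p+1) * 2 ^ p) := by
  have h := intervalIntegral.integral_comp_sub_right (a := u) (b := v)
    (fun t => (t ^ 2 / 2) ^ p) u
  simp only [sub_self] at h
  rw [h, kernel_int p (v - u) hp (by linarith)]

lemma K_left (p : ℝ) (hp : 0 < p) (u v : ℝ) (huv : u ≤ v) :
    ∫ t in u..v, ((t - v) ^ 2 / 2) ^ p = (v - u) ^ (2*p+1) / ((2*p+1) * 2 ^ p) := by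
  have hcongr : ∫ t in u..v, ((t - v) ^ 2 / 2) ^ p
      = ∫ t in u..v, (((v - t)) ^ 2 / 2) ^ p := by
    apply intervalIntegral.integral_congr
    intro t _
    show ((t - v) ^ 2 / 2) ^ p = ((v - t) ^ 2 / 2) ^ p
    congr 1
    ring
  have h := intervalIntegral.integral_comp_sub_left (a := u) (b := v)
    (fun t => (t ^ 2 / 2) ^ p) v
  simp only [sub_self] at h
  rw [hcongr]
  rw [show (∫ t in u..v, ((v - t) ^ 2 / 2) ^ p)
    = ∫ t in u..v, (fun z => (z ^ 2 / 2) ^ p) (v - t) from rfl, h,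
    kernel_int p (v - u) hp (by linarith)]

lemma K_mid (p : ℝ) (hp : 0 < p) (u v : ℝ) (huv : u ≤ v) :
    ∫ t in u..v, ((t - (u+v)/2) ^ 2 / 2) ^ p
      = 2 * (((v-u)/2) ^ (2*p+1) / ((2*p+1) * 2 ^ p)) := by
  set c := (u+v)/2 with hc
  have hcont : Continuous (fun t : ℝ => ((t - c) ^ 2 / 2) ^ p) := by
    apply (Real.continuous_rpow_const hp.le).comp
    fun_prop
  have hsplit := intervalIntegral.integral_add_adjacent_intervals
    (a := u) (b := c) (c := v) (f := fun t => ((t - c) ^ 2 / 2) ^ p)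
    (hcont.intervalIntegrable (μ := volume) u c) (hcont.intervalIntegrable (μ := volume) c v)
  have huc : u ≤ c := by rw [hc]; linarith
  have hcv : c ≤ v := by rw [hc]; linarith
  have h1 : ∫ t in u..c, ((t - c) ^ 2 / 2) ^ p = (c - u) ^ (2*p+1) / ((2*p+1) * 2 ^ p) :=
    K_left p hp u c huc
  have h2 : ∫ t in c..v, ((t - c) ^ 2 / 2) ^ p = (v - c) ^ (2*p+1) / ((2*p+1) * 2 ^ p) :=
    K_right p hp c v hcv
  rw [← hsplit, h1, h2]
  have e1 : c - u = (v - u)/2 := by rw [hc]; ring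
  have e2 : v - c = (v - u)/2 := by rw [hc]; ring
  rw [e1, e2]
  ring

lemma exp3 (p q : ℝ) (hp : 1 < p) (hq : 1 < q) (hpq : 1/p + 1/q = 1) :
    (2*p+1) * (1/p) + 1/q = 3 := by
  have hp0 : (0:ℝ) < p := by linarith
  have h1q : 1/q = 1 - 1/p := by linarith
  rw [h1q]
  field_simp
  ring

lemma combine (p q s L G : ℝ) (hp : 1 < p) (hq : 1 < q) (hpq : 1/p + 1/q = 1)
    (hL : 0 ≤ L) (hG : 0 ≤ G) :
    (L ^ (2*p+1) / ((2*p+1) * 2 ^ p)) ^ (1/p) * (2 ^ (s-1) * L * G ^ q) ^ (1/q)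
      = 2 ^ ((s-1)/q) / (2 * (2*p+1) ^ (1/p)) * (L ^ 3 * G) := by
  have hp0 : (0:ℝ) < p := by linarith
  have hq0 : (0:ℝ) < q := by linarith
  have h2p1 : (0:ℝ) < 2*p+1 := by linarith
  have e1 : (L ^ (2*p+1) / ((2*p+1) * 2 ^ p)) ^ (1/p)
      = L ^ ((2*p+1) * (1/p)) / ((2*p+1) ^ (1/p) * 2) := by
    rw [Real.div_rpow (by positivity) (by positivity),
      Real.mul_rpow h2p1.le (by positivity), ← Real.rpow_mul hL,
      ← Real.rpow_mul (by norm_num : (0:ℝ) ≤ 2), mul_one_div_cancel hp0.ne', Real.rpow_one]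
  have e2 : (2 ^ (s-1) * L * G ^ q) ^ (1/q) = 2 ^ ((s-1)/q) * L ^ (1/q) * G := by
    rw [Real.mul_rpow (by positivity) (by positivity),
      Real.mul_rpow (by positivity) hL,
      ← Real.rpow_mul (by norm_num : (0:ℝ) ≤ 2),
      one_div q, Real.rpow_rpow_inv hG hq0.ne', ← one_div q, mul_one_div]
  rw [e1, e2]
  have e3 : L ^ ((2*p+1) * (1/p)) * L ^ (1/q) = L ^ 3 := by
    rw [← Real.rpow_add' hL (by rw [exp3 p q hp hq hpq]; norm_num),
      exp3 p q hp hq hpq,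
      show (3:ℝ) = ((3:ℕ):ℝ) by norm_num, Real.rpow_natCast]
  rw [← e3]
  have h2p1p : ((2*p+1):ℝ) ^ (1/p) ≠ 0 := (Real.rpow_pos_of_pos h2p1 _).ne'
  field_simp

lemma combine_mid (p q s L G : ℝ) (hp : 1 < p) (hq : 1 < q) (hpq : 1/p + 1/q = 1)
    (hL : 0 ≤ L) (hG : 0 ≤ G) :
    (2 * ((L/2) ^ (2*p+1) / ((2*p+1) * 2 ^ p))) ^ (1/p) * (2 ^ (s-1) * L * G ^ q) ^ (1/q)
      = 2 ^ ((s-1)/q) / (2 * (2*p+1) ^ (1/p)) * (L ^ 3 / 4 * G) := by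
  have hp0 : (0:ℝ) < p := by linarith
  have hq0 : (0:ℝ) < q := by linarith
  have h2p1 : (0:ℝ) < 2*p+1 := by linarith
  have hL2 : (0:ℝ) ≤ L/2 := by linarith
  have hbase := combine p q s (L/2) G hp hq hpq hL2 hG
  have e1 : (2 * ((L/2) ^ (2*p+1) / ((2*p+1) * 2 ^ p))) ^ (1/p)
      = 2 ^ (1/p) * ((L/2) ^ (2*p+1) / ((2*p+1) * 2 ^ p)) ^ (1/p) :=
    Real.mul_rpow (by norm_num) (by positivity)
  have e2 : (2 ^ (s-1) * L * G ^ q) ^ (1/q)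
      = 2 ^ (1/q) * (2 ^ (s-1) * (L/2) * G ^ q) ^ (1/q) := by
    rw [← Real.mul_rpow (by norm_num) (by positivity)]
    congr 1
    ring
  rw [e1, e2]
  have e4 : (2:ℝ) ^ (1/p) * 2 ^ (1/q) = 2 := by
    rw [← Real.rpow_add (by norm_num), hpq, Real.rpow_one]
  calc 2 ^ (1/p) * ((L/2) ^ (2*p+1) / ((2*p+1) * 2 ^ p)) ^ (1/p)
        * (2 ^ (1/q) * (2 ^ (s-1) * (L/2) * G ^ q) ^ (1/q))
      = (2 ^ (1/p) * 2 ^ (1/q)) *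
        (((L/2) ^ (2*p+1) / ((2*p+1) * 2 ^ p)) ^ (1/p) * (2 ^ (s-1) * (L/2) * G ^ q) ^ (1/q)) := by
        ring
    _ = 2 * (2 ^ ((s-1)/q) / (2 * (2*p+1) ^ (1/p)) * ((L/2) ^ 3 * G)) := by rw [e4, hbase]
    _ = 2 ^ ((s-1)/q) / (2 * (2*p+1) ^ (1/p)) * (L ^ 3 / 4 * G) := by ring

end Aux

theorem stmt12 (a b : ℝ) (ha : 0 ≤ a) (hab : a < b) (f f' f'' : ℝ → ℝ)
    (hf' : ∀ t ∈ Set.Icc a b, HasDerivAt f (f' t) t)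
    (hf'' : ∀ t ∈ Set.Icc a b, HasDerivAt f' (f'' t) t)
    (hint : IntervalIntegrable f'' volume a b)
    (s : ℝ) (hs0 : 0 < s) (hs1 : s ≤ 1)
    (p q : ℝ) (hp : 1 < p) (hq : 1 < q) (hpq : 1 / p + 1 / q = 1)
    (hconc : SConcaveOn s (Set.Icc a b) (fun t => |f'' t| ^ q)) :
    ∀ x ∈ Set.Icc a ((a + b) / 2),
      |((1 / (b - a)) * ∫ t in a..b, f t) - (1 / 2) * (f x + f (a + b - x))
          + (1 / 2) * (x - (3 * a + b) / 4) * (f' x - f' (a + b - x))|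
        ≤ (2 : ℝ) ^ ((s - 1) / q) / (2 * (b - a) * (2 * p + 1) ^ (1 / p)) *
          ((x - a) ^ 3 * |f'' ((x + a) / 2)|
            + (a + b - 2 * x) ^ 3 / 4 * |f'' ((a + b) / 2)|
            + (x - a) ^ 3 * |f'' ((a + 2 * b - x) / 2)|) := by
  intro x hx
  obtain ⟨hax, hxc⟩ := hx
  have hp0 : (0:ℝ) < p := by linarith
  have hba : (0:ℝ) < b - a := by linarith
  have hxy : x ≤ a + b - x := by linarith
  have hyb : a + b - x ≤ b := by linarith
  have hable : a ≤ b := hab.le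
  -- subset helpers
  have hs1' : Set.Icc a x ⊆ Set.Icc a b := Set.Icc_subset_Icc le_rfl (by linarith)
  have hs2' : Set.Icc x (a+b-x) ⊆ Set.Icc a b := Set.Icc_subset_Icc hax hyb
  have hs3' : Set.Icc (a+b-x) b ⊆ Set.Icc a b := Set.Icc_subset_Icc (by linarith) le_rfl
  have hmono : ∀ u v : ℝ, a ≤ u → u ≤ v → v ≤ b → IntervalIntegrable f'' volume u v := by
    intro u v h1 h2 h3
    exact hint.mono_set (by
      rw [Set.uIcc_of_le h2, Set.uIcc_of_le hable]
      exact Set.Icc_subset_Icc h1 h3)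
  -- the three identities
  have hI1 := parts2 f f' f'' a x a hax
    (fun t ht => hf' t (hs1' ht)) (fun t ht => hf'' t (hs1' ht))
    (hmono a x le_rfl hax (by linarith))
  have hI2 := parts2 f f' f'' x (a+b-x) ((a+b)/2) hxy
    (fun t ht => hf' t (hs2' ht)) (fun t ht => hf'' t (hs2' ht))
    (hmono x (a+b-x) hax hxy hyb)
  have hI3 := parts2 f f' f'' (a+b-x) b b hyb
    (fun t ht => hf' t (hs3' ht)) (fun t ht => hf'' t (hs3' ht))
    (hmono (a+b-x) b (by linarith) hyb le_rfl)
  -- split the integral of f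
  have hcf : ContinuousOn f (Set.Icc a b) :=
    fun t ht => ((hf' t ht).continuousAt).continuousWithinAt
  have hfint : ∀ u v : ℝ, a ≤ u → u ≤ v → v ≤ b → IntervalIntegrable f volume u v := by
    intro u v h1 h2 h3
    exact (hcf.mono (by rw [Set.uIcc_of_le h2]; exact Set.Icc_subset_Icc h1 h3)).intervalIntegrable
  have hsplit : (∫ t in a..b, f t)
      = (∫ t in a..x, f t) + (∫ t in x..(a+b-x), f t) + (∫ t in (a+b-x)..b, f t) := by
    rw [intervalIntegral.integral_add_adjacent_intervals
      (hfint a x le_rfl hax (by linarith)) (hfint x (a+b-x) hax hxy hyb),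
      intervalIntegral.integral_add_adjacent_intervals
      (hfint a (a+b-x) le_rfl (by linarith) (by linarith)) (hfint (a+b-x) b (by linarith) hyb le_rfl)]
  -- notation for pieces
  set I1 := ∫ t in a..x, (t - a) ^ 2 / 2 * f'' t with hI1def
  set I2 := ∫ t in x..(a+b-x), (t - (a+b)/2) ^ 2 / 2 * f'' t with hI2def
  set I3 := ∫ t in (a+b-x)..b, (t - b) ^ 2 / 2 * f'' t with hI3def
  have hident : ((1 / (b - a)) * ∫ t in a..b, f t) - (1 / 2) * (f x + f (a + b - x))
      + (1 / 2) * (x - (3 * a + b) / 4) * (f' x - f' (a + b - x))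
      = (I1 + I2 + I3) / (b - a) := by
    rw [hsplit, hI1, hI2, hI3]
    field_simp
    ring
  -- bounds on the pieces
  have hb1 := piece_bound a b a x a s p q f'' hp hq hpq hs0 hconc hint hable le_rfl hax (by linarith)
  have hb2 := piece_bound a b x (a+b-x) ((a+b)/2) s p q f'' hp hq hpq hs0 hconc hint hable hax hxy hyb
  have hb3 := piece_bound a b (a+b-x) b b s p q f'' hp hq hpq hs0 hconc hint hable (by linarith) hyb le_rfl
  -- rewrite kernel integrals
  rw [K_right p hp0 a x hax] at hb1
  rw [K_left p hp0 (a+b-x) b hyb] at hb3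
  have hK2 : (∫ t in x..(a+b-x), ((t - (a+b)/2) ^ 2 / 2) ^ p)
      = 2 * (((a + b - x - x)/2) ^ (2*p+1) / ((2*p+1) * 2 ^ p)) := by
    have := K_mid p hp0 x (a+b-x) hxy
    rwa [show (x + (a+b-x))/2 = (a+b)/2 by ring] at this
  rw [hK2] at hb2
  -- rewrite midpoints and lengths
  rw [show (a + x)/2 = (x + a)/2 by ring] at hb1
  rw [show (x + (a+b-x))/2 = (a+b)/2 by ring] at hb2
  rw [show ((a+b-x) + b)/2 = (a + 2*b - x)/2 by ring] at hb3
  rw [show b - (a+b-x) = x - a by ring] at hb3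
  rw [show a + b - x - x = a + b - 2*x by ring] at hb2
  -- combine algebra
  rw [combine p q s (x - a) (|f'' ((x+a)/2)|) hp hq hpq (by linarith) (abs_nonneg _)] at hb1
  rw [combine_mid p q s (a + b - 2*x) (|f'' ((a+b)/2)|) hp hq hpq (by linarith) (abs_nonneg _)] at hb2
  rw [combine p q s (x - a) (|f'' ((a+2*b-x)/2)|) hp hq hpq (by linarith) (abs_nonneg _)] at hb3
  -- final assembly
  set c0 : ℝ := 2 ^ ((s-1)/q) / (2 * (2*p+1) ^ (1/p)) with hc0
  have h2p1p : (0:ℝ) < ((2*p+1):ℝ) ^ (1/p) := Real.rpow_pos_of_pos (by linarith) _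
  calc |((1 / (b - a)) * ∫ t in a..b, f t) - (1 / 2) * (f x + f (a + b - x))
      + (1 / 2) * (x - (3 * a + b) / 4) * (f' x - f' (a + b - x))|
      = |I1 + I2 + I3| / (b - a) := by
        rw [hident, abs_div, abs_of_pos hba]
    _ ≤ (c0 * ((x - a) ^ 3 * |f'' ((x+a)/2)|)
          + c0 * ((a + b - 2*x) ^ 3 / 4 * |f'' ((a+b)/2)|)
          + c0 * ((x - a) ^ 3 * |f'' ((a+2*b-x)/2)|)) / (b - a) := by
        gcongr
        calc |I1 + I2 + I3| ≤ |I1| + |I2| + |I3| := abs_add_three I1 I2 I3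
          _ ≤ _ := by
              exact add_le_add (add_le_add hb1 hb2) hb3
    _ = (2 : ℝ) ^ ((s - 1) / q) / (2 * (b - a) * (2 * p + 1) ^ (1 / p)) *
          ((x - a) ^ 3 * |f'' ((x + a) / 2)|
            + (a + b - 2 * x) ^ 3 / 4 * |f'' ((a + b) / 2)|
            + (x - a) ^ 3 * |f'' ((a + 2 * b - x) / 2)|) := by
        rw [hc0]
        field_simp
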